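/- Let H = (V, E) be a linear hypergraph with at most n edges, each with at most n vertices, where n is a perfect square, and suppose every vertex has degree at least √n. Suppose there exists a vertex v with d(v) = √n such that |adj(u)| = n for all u in adj(v) ∪ {v}. Then H admits a proper coloring with √n + 1 colors, and hence with n colors. -/

import Mathlib

open scoped Classical

/-- A finite hypergraph is given by its finite set of edges, each a finite set of vertices.
`Linear E` means any two distinct edges share at most one vertex. -/
def HG.Linear {V : Type*} (E : Finset (Finset V)) : Prop :=
  ∀ e₁ ∈ E, ∀ e₂ ∈ E, e₁ ≠ e₂ → (e₁ ∩ e₂).card ≤ 1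

/-- The degree of a vertex: the number of edges containing it. -/
noncomputable def HG.deg {V : Type*} (E : Finset (Finset V)) (v : V) : ℕ :=
  (E.filter (fun e => v ∈ e)).card

/-- The vertex set of the hypergraph: the union of its edges. -/
noncomputable def HG.verts {V : Type*} (E : Finset (Finset V)) : Finset V := E.sup id

/-- The adjacency of a vertex `v`: vertices distinct from `v` sharing an edge with `v`. -/
noncomputable def HG.adj {V : Type*} (E : Finset (Finset V)) (v : V) : Finset V :=
  (HG.verts E).filter (fun u => u ≠ v ∧ ∃ e ∈ E, v ∈ e ∧ u ∈ e)

/-- A proper coloring: vertices lying in a common edge receive distinct colors. -/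
def HG.Proper {V : Type*} {m : ℕ} (E : Finset (Finset V)) (f : V → Fin m) : Prop :=
  ∀ e ∈ E, ∀ u ∈ e, ∀ w ∈ e, u ≠ w → f u ≠ f w

namespace HGaux
open Finset

variable {V : Type*} {E : Finset (Finset V)}

lemma mem_verts {u : V} : u ∈ HG.verts E ↔ ∃ e ∈ E, u ∈ e := by
  simp [HG.verts, Finset.mem_sup]

lemma mem_adj {u w : V} :
    u ∈ HG.adj E w ↔ u ≠ w ∧ ∃ e ∈ E, w ∈ e ∧ u ∈ e := by
  constructor
  · intro h; exact (Finset.mem_filter.mp h).2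
  · rintro ⟨h1, e, he, hw, hu⟩
    exact Finset.mem_filter.mpr ⟨mem_verts.mpr ⟨e, he, hu⟩, h1, e, he, hw, hu⟩

lemma adj_comm {u w : V} : u ∈ HG.adj E w ↔ w ∈ HG.adj E u := by
  simp only [mem_adj]
  constructor
  · rintro ⟨h1, e, he, hw, hu⟩; exact ⟨h1.symm, e, he, hu, hw⟩
  · rintro ⟨h1, e, he, hw, hu⟩; exact ⟨h1.symm, e, he, hu, hw⟩

lemma not_self_adj {u : V} : u ∉ HG.adj E u := by
  simp [mem_adj]

lemma adj_subset_verts {u : V} : HG.adj E u ⊆ HG.verts E := Finset.filter_subset _ _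

lemma uniqueEdge (hlin : HG.Linear E) {e f : Finset V} (he : e ∈ E) (hf : f ∈ E)
    {u x : V} (hu : u ∈ e) (hu' : u ∈ f) (hx : x ∈ e) (hx' : x ∈ f) (hne : x ≠ u) : e = f := by
  by_contra h
  have h1 := hlin e he f hf h
  have h2 : ({x, u} : Finset V) ⊆ e ∩ f := by
    intro y hy
    rcases Finset.mem_insert.mp hy with rfl | hy
    · exact Finset.mem_inter.mpr ⟨hx, hx'⟩
    · rcases Finset.mem_singleton.mp hy with rfl
      exact Finset.mem_inter.mpr ⟨hu, hu'⟩
  have h3 : ({x, u} : Finset V).card = 2 := Finset.card_pair hne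
  have := Finset.card_le_card h2
  omega

/-- sum tightness helpers -/
lemma all_eq_of_sum_le {α : Type*} (s : Finset α) (f : α → ℕ) (c : ℕ)
    (h : ∀ x ∈ s, c ≤ f x) (h2 : s.sum f ≤ s.card * c) : ∀ x ∈ s, f x = c := by
  by_contra hc
  push_neg at hc
  obtain ⟨x, hx, hne⟩ := hc
  have hlt : s.sum (fun _ => c) < s.sum f :=
    Finset.sum_lt_sum h ⟨x, hx, lt_of_le_of_ne (h x hx) (Ne.symm hne)⟩
  rw [Finset.sum_const, smul_eq_mul] at hlt
  omega

lemma all_eq_of_le_sum {α : Type*} (s : Finset α) (f : α → ℕ) (c : ℕ)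
    (h : ∀ x ∈ s, f x ≤ c) (h2 : s.card * c ≤ s.sum f) : ∀ x ∈ s, f x = c := by
  by_contra hc
  push_neg at hc
  obtain ⟨x, hx, hne⟩ := hc
  have hlt : s.sum f < s.sum (fun _ => c) :=
    Finset.sum_lt_sum h ⟨x, hx, lt_of_le_of_ne (h x hx) hne⟩
  rw [Finset.sum_const, smul_eq_mul] at hlt
  omega

/-- adjacency decomposes as disjoint union over edges through u -/
lemma adj_eq_biUnion (hlin : HG.Linear E) (u : V) :
    HG.adj E u = (E.filter (fun f => u ∈ f)).biUnion (fun f => f.erase u) := by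
  ext x
  simp only [mem_adj, Finset.mem_biUnion, Finset.mem_filter, Finset.mem_erase]
  constructor
  · rintro ⟨h1, e, he, hw, hu⟩; exact ⟨e, ⟨he, hw⟩, h1, hu⟩
  · rintro ⟨e, ⟨he, hw⟩, h1, hu⟩; exact ⟨h1, e, he, hw, hu⟩

lemma card_adj (hlin : HG.Linear E) (u : V) :
    (HG.adj E u).card = ∑ f ∈ E.filter (fun f => u ∈ f), (f.card - 1) := by
  rw [adj_eq_biUnion hlin u, Finset.card_biUnion]
  · apply Finset.sum_congr rfl
    intro f hf
    rw [Finset.card_erase_of_mem (Finset.mem_filter.mp hf).2]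
  · intro e he f hf hne
    simp only [Finset.coe_filter, Set.mem_setOf_eq] at he hf
    apply Finset.disjoint_left.mpr
    intro x hx hx'
    simp only [Finset.mem_erase] at hx hx'
    exact hne (uniqueEdge hlin he.1 hf.1 he.2 hf.2 hx.2 hx'.2 hx.1)



lemma deg_eq (u : V) : HG.deg E u = (E.filter (fun f => u ∈ f)).card := rfl

/-- Counting edges meeting a fixed edge `e`: they are at least `e.card * (k-1)`. -/
lemma edges_meeting (hlin : HG.Linear E) {k : ℕ}
    (hdeg : ∀ u ∈ HG.verts E, k ≤ HG.deg E u) {e : Finset V} (he : e ∈ E) :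
    e.card * (k - 1) + 1 ≤ E.card := by
  classical
  set B := e.biUnion (fun u => (E.filter (fun f => u ∈ f)).erase e) with hB
  have hdisj : ∀ u ∈ e, ∀ u' ∈ e, u ≠ u' →
      Disjoint ((E.filter (fun f => u ∈ f)).erase e) ((E.filter (fun f => u' ∈ f)).erase e) := by
    intro u hu u' hu' hne
    apply Finset.disjoint_left.mpr
    intro f hf hf'
    rw [Finset.mem_erase, Finset.mem_filter] at hf hf'
    exact hf.1 ((uniqueEdge hlin he hf.2.1 hu hf.2.2 hu' hf'.2.2 (Ne.symm hne)).symm)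
  have hcard : B.card = ∑ u ∈ e, ((E.filter (fun f => u ∈ f)).erase e).card :=
    Finset.card_biUnion hdisj
  have hsub : B ⊆ E.erase e := by
    intro f hf
    rw [hB, Finset.mem_biUnion] at hf
    obtain ⟨u, hu, hf⟩ := hf
    rw [Finset.mem_erase, Finset.mem_filter] at hf
    exact Finset.mem_erase.mpr ⟨hf.1, hf.2.1⟩
  have hlow : ∀ u ∈ e, k - 1 ≤ ((E.filter (fun f => u ∈ f)).erase e).card := by
    intro u hu
    have hmem : e ∈ E.filter (fun f => u ∈ f) := Finset.mem_filter.mpr ⟨he, hu⟩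
    rw [Finset.card_erase_of_mem hmem]
    have := hdeg u (mem_verts.mpr ⟨e, he, hu⟩)
    rw [deg_eq] at this
    omega
  have h1 : e.card * (k - 1) ≤ B.card := by
    rw [hcard]
    calc e.card * (k-1) = ∑ _u ∈ e, (k-1) := by rw [Finset.sum_const, smul_eq_mul]
    _ ≤ _ := Finset.sum_le_sum hlow
  have h2 := Finset.card_le_card hsub
  rw [Finset.card_erase_of_mem he] at h2
  have h3 : 1 ≤ E.card := Finset.card_pos.mpr ⟨e, he⟩
  omega

lemma edge_card_le (hlin : HG.Linear E) {k : ℕ} (hk : 2 ≤ k) (hE : E.card ≤ k ^ 2)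
    (hdeg : ∀ u ∈ HG.verts E, k ≤ HG.deg E u) {e : Finset V} (he : e ∈ E) :
    e.card ≤ k + 1 := by
  have h := edges_meeting hlin hdeg he
  obtain ⟨m, rfl⟩ : ∃ m, k = m + 2 := ⟨k - 2, by omega⟩
  have hm : m + 2 - 1 = m + 1 := rfl
  rw [hm] at h
  have h2 : e.card * (m + 1) ≤ (m + 3) * (m + 1) := by nlinarith
  have := Nat.le_of_mul_le_mul_right h2 (by omega : 0 < m + 1)
  omega

/-- double counting swap -/
lemma sum_card_filter_mem (A : Finset V) (F : Finset (Finset V)) :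
    ∑ u ∈ A, (F.filter (fun f => u ∈ f)).card = ∑ f ∈ F, (f ∩ A).card := by
  classical
  have h1 : ∀ u, (F.filter (fun f => u ∈ f)).card = ∑ f ∈ F, if u ∈ f then 1 else 0 := by
    intro u; rw [Finset.card_filter]
  have h2 : ∀ f : Finset V, (f ∩ A).card = ∑ u ∈ A, if u ∈ f then 1 else 0 := by
    intro f
    rw [Finset.inter_comm, ← Finset.filter_mem_eq_inter, Finset.card_filter]
  simp only [h1, h2]
  exact Finset.sum_comm

/-- edges through v have exactly k+1 vertices -/
lemma edges_through_v (hlin : HG.Linear E) {k : ℕ} (hk : 2 ≤ k) (hE : E.card ≤ k ^ 2)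
    (hdeg : ∀ u ∈ HG.verts E, k ≤ HG.deg E u) {v : V} (hdv : HG.deg E v = k)
    (hav : (HG.adj E v).card = k ^ 2) :
    ∀ f ∈ E, v ∈ f → f.card = k + 1 := by
  classical
  have hsum : ∑ f ∈ E.filter (fun f => v ∈ f), (f.card - 1) = k ^ 2 := by
    rw [← card_adj hlin v, hav]
  have hle : ∀ f ∈ E.filter (fun f => v ∈ f), f.card - 1 ≤ k := by
    intro f hf
    have := edge_card_le hlin hk hE hdeg (Finset.mem_filter.mp hf).1
    omega
  have hcard : (E.filter (fun f => v ∈ f)).card = k := hdv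
  have key := all_eq_of_le_sum _ _ k hle (by rw [hsum, hcard]; ring_nf; exact le_refl _)
  intro f hf hvf
  have h1 := key f (Finset.mem_filter.mpr ⟨hf, hvf⟩)
  have h2 : 1 ≤ f.card := Finset.card_pos.mpr ⟨v, hvf⟩
  omega

/-- The main tightness count around `v`. -/
lemma tight (hlin : HG.Linear E) {k : ℕ} (hk : 2 ≤ k) (hE : E.card ≤ k ^ 2)
    (hdeg : ∀ u ∈ HG.verts E, k ≤ HG.deg E u) {v : V} (hdv : HG.deg E v = k)
    (hav : (HG.adj E v).card = k ^ 2) :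
    (∀ u ∈ HG.adj E v, HG.deg E u = k) ∧ E.card = k ^ 2 ∧
      (∀ f ∈ E, v ∉ f → (f ∩ HG.adj E v).card = k) := by
  classical
  set A := HG.adj E v with hA
  set E' := E.filter (fun f => v ∉ f) with hE'
  -- for u ∈ A, number of edges through u avoiding v is deg u - 1
  have huniq : ∀ u ∈ A, (E.filter (fun f => u ∈ f ∧ v ∈ f)).card = 1 := by
    intro u hu
    rw [mem_adj] at hu
    obtain ⟨hne, e₀, he₀, hv₀, hu₀⟩ := hu
    rw [Finset.card_eq_one]
    refine ⟨e₀, ?_⟩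
    apply Finset.eq_singleton_iff_unique_mem.mpr
    refine ⟨Finset.mem_filter.mpr ⟨he₀, hu₀, hv₀⟩, ?_⟩
    intro f hf
    rw [Finset.mem_filter] at hf
    exact (uniqueEdge hlin hf.1 he₀ hf.2.2 hv₀ hf.2.1 hu₀ hne).symm ▸ rfl
  have hsplit : ∀ u ∈ A, (E'.filter (fun f => u ∈ f)).card = HG.deg E u - 1 := by
    intro u hu
    have h1 : (E.filter (fun f => u ∈ f)).filter (fun f => v ∈ f) ∪
        (E.filter (fun f => u ∈ f)).filter (fun f => v ∉ f) = E.filter (fun f => u ∈ f) :=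
      Finset.filter_union_filter_not_eq (p := fun f => v ∈ f) _
    have hd : Disjoint ((E.filter (fun f => u ∈ f)).filter (fun f => v ∈ f))
        ((E.filter (fun f => u ∈ f)).filter (fun f => v ∉ f)) :=
      Finset.disjoint_filter_filter_not _ _ _
    have h2 : ((E.filter (fun f => u ∈ f)).filter (fun f => v ∈ f)).card +
        ((E.filter (fun f => u ∈ f)).filter (fun f => v ∉ f)).card = HG.deg E u := by
      rw [← Finset.card_union_of_disjoint hd, h1, deg_eq]
    have h3 : (E.filter (fun f => u ∈ f)).filter (fun f => v ∈ f) =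
        E.filter (fun f => u ∈ f ∧ v ∈ f) := by rw [Finset.filter_filter]
    have h4 : (E.filter (fun f => u ∈ f)).filter (fun f => v ∉ f) =
        E'.filter (fun f => u ∈ f) := by
      rw [Finset.filter_filter, Finset.filter_filter]
      exact Finset.filter_congr (fun f _ => by tauto)
    rw [h3, h4, huniq u hu] at h2
    omega
  -- the double count
  have hdc : ∑ u ∈ A, (E'.filter (fun f => u ∈ f)).card = ∑ f ∈ E', (f ∩ A).card :=
    sum_card_filter_mem A E'
  -- each f ∈ E' meets A in at most k points
  have hme : ∀ f ∈ E', (f ∩ A).card ≤ k := by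
    intro f hf
    rw [hE', Finset.mem_filter] at hf
    have hsub : f ∩ A ⊆ (E.filter (fun e => v ∈ e)).biUnion (fun e => f ∩ e.erase v) := by
      intro x hx
      rw [Finset.mem_inter] at hx
      have := hx.2
      rw [hA, adj_eq_biUnion hlin, Finset.mem_biUnion] at this
      obtain ⟨e, he, hxe⟩ := this
      exact Finset.mem_biUnion.mpr ⟨e, he, Finset.mem_inter.mpr ⟨hx.1, hxe⟩⟩
    calc (f ∩ A).card ≤ ((E.filter (fun e => v ∈ e)).biUnion (fun e => f ∩ e.erase v)).card :=
          Finset.card_le_card hsub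
      _ ≤ ∑ e ∈ E.filter (fun e => v ∈ e), (f ∩ e.erase v).card := Finset.card_biUnion_le
      _ ≤ ∑ e ∈ E.filter (fun e => v ∈ e), 1 := by
          apply Finset.sum_le_sum
          intro e he
          rw [Finset.mem_filter] at he
          have hne : f ≠ e := fun h => hf.2 (h ▸ he.2)
          have h1 := hlin f hf.1 e he.1 hne
          have : f ∩ e.erase v ⊆ f ∩ e := by
            apply Finset.inter_subset_inter (le_refl _) (Finset.erase_subset _ _)
          exact le_trans (Finset.card_le_card this) h1
      _ = k := by rw [Finset.sum_const, smul_eq_mul, Nat.mul_one]; exact hdv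
  -- arithmetic identity helper
  obtain ⟨m, hm⟩ : ∃ m, k = m + 1 := ⟨k - 1, by omega⟩
  have hid : (k ^ 2 - k) * k = k ^ 2 * (k - 1) := by
    subst hm
    have h1 : (m+1)^2 - (m+1) = (m+1)*m := by
      have h0 : (m+1)^2 = (m+1)*m + (m+1) := by ring
      omega
    have h2 : (m+1) - 1 = m := rfl
    rw [h1, h2]; ring
  have hElow : k ≤ E.card := by
    have h := Finset.card_le_card (Finset.filter_subset (fun f => v ∈ f) E)
    have h2 : (E.filter (fun f => v ∈ f)).card = k := hdv
    omega
  have hE'card : E'.card = E.card - k := by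
    have h := Finset.card_filter_add_card_filter_not (s := E) (p := fun f => v ∈ f)
    have h2 : (E.filter (fun f => v ∈ f)).card = k := hdv
    have h3 : E' = E.filter (fun f => ¬ v ∈ f) := rfl
    rw [h3]
    omega
  have hdegA : ∀ u ∈ A, k ≤ HG.deg E u := fun u hu => hdeg u (adj_subset_verts hu)
  have hlow : ∀ u ∈ A, k - 1 ≤ (E'.filter (fun f => u ∈ f)).card := by
    intro u hu; rw [hsplit u hu]; have := hdegA u hu; omega
  have hS1 : k ^ 2 * (k - 1) ≤ ∑ u ∈ A, (E'.filter (fun f => u ∈ f)).card := by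
    calc k ^ 2 * (k - 1) = ∑ _u ∈ A, (k - 1) := by rw [Finset.sum_const, smul_eq_mul, hav]
    _ ≤ _ := Finset.sum_le_sum hlow
  have hS2 : ∑ f ∈ E', (f ∩ A).card ≤ E'.card * k := by
    calc _ ≤ ∑ _f ∈ E', k := Finset.sum_le_sum hme
    _ = E'.card * k := by rw [Finset.sum_const, smul_eq_mul]
  have hEcard : E.card = k ^ 2 := by
    have h1 : k ^ 2 * (k - 1) ≤ (E.card - k) * k := by
      rw [← hE'card]; exact le_trans hS1 (hdc ▸ hS2)
    have h2 : k * (k - 1) ≤ E.card - k := by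
      apply Nat.le_of_mul_le_mul_right _ (show 0 < k by omega)
      calc k * (k - 1) * k = k ^ 2 * (k - 1) := by ring
      _ ≤ (E.card - k) * k := h1
    have h3 : k * (k - 1) + k = k ^ 2 := by subst hm; have : (m+1)-1 = m := rfl; rw [this]; ring
    omega
  have hdegAe : ∀ u ∈ A, HG.deg E u = k := by
    have hsum_le : ∑ u ∈ A, (E'.filter (fun f => u ∈ f)).card ≤ A.card * (k - 1) := by
      rw [hav]
      calc _ = ∑ f ∈ E', (f ∩ A).card := hdc
      _ ≤ E'.card * k := hS2
      _ ≤ k ^ 2 * (k - 1) := by rw [hE'card, hEcard]; exact le_of_eq hid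
    intro u hu
    have h1 := all_eq_of_sum_le A _ (k - 1) hlow hsum_le u hu
    rw [hsplit u hu] at h1
    have := hdegA u hu
    omega
  have hfA : ∀ f ∈ E', (f ∩ A).card = k := by
    apply all_eq_of_le_sum E' _ k hme
    rw [hE'card, hEcard]
    calc (k ^ 2 - k) * k = k ^ 2 * (k - 1) := hid
    _ ≤ ∑ u ∈ A, (E'.filter (fun f => u ∈ f)).card := hS1
    _ = ∑ f ∈ E', (f ∩ A).card := hdc
  exact ⟨hdegAe, hEcard, fun f hf hvf => hfA f (Finset.mem_filter.mpr ⟨hf, hvf⟩)⟩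

/-- every edge has exactly k+1 vertices -/
lemma all_edges_card (hlin : HG.Linear E) {k : ℕ} (hk : 2 ≤ k) (hE : E.card ≤ k ^ 2)
    (hdeg : ∀ u ∈ HG.verts E, k ≤ HG.deg E u) {v : V} (hdv : HG.deg E v = k)
    (hadj : ∀ u, (u ∈ HG.adj E v ∨ u = v) → (HG.adj E u).card = k ^ 2) :
    ∀ f ∈ E, f.card = k + 1 := by
  classical
  have hav : (HG.adj E v).card = k ^ 2 :=
    hadj v (Or.inr rfl)
  obtain ⟨hdegA, hEcard, hmeet⟩ := tight hlin hk hE hdeg hdv hav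
  -- edges through any u ∈ adj v have card k+1
  have hthrough : ∀ u ∈ HG.adj E v, ∀ f ∈ E, u ∈ f → f.card = k + 1 := by
    intro u hu
    exact edges_through_v hlin hk hE hdeg (hdegA u hu)
      (hadj u (Or.inl hu))
  intro f hf
  by_cases hvf : v ∈ f
  · exact edges_through_v hlin hk hE hdeg hdv hav f hf hvf
  · have h1 := hmeet f hf hvf
    have h2 : (f ∩ HG.adj E v).Nonempty := by
      rw [← Finset.card_pos, h1]; omega
    obtain ⟨u, hu⟩ := h2
    rw [Finset.mem_inter] at hu
    exact hthrough u hu.2 f hf hu.1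

/-- all degrees are k, and every two distinct edges intersect -/
lemma all_deg_and_meet (hlin : HG.Linear E) {k : ℕ} (hk : 2 ≤ k) (hE : E.card ≤ k ^ 2)
    (hdeg : ∀ u ∈ HG.verts E, k ≤ HG.deg E u) {v : V} (hdv : HG.deg E v = k)
    (hadj : ∀ u, (u ∈ HG.adj E v ∨ u = v) → (HG.adj E u).card = k ^ 2) :
    (∀ u ∈ HG.verts E, HG.deg E u = k) ∧
      (∀ f ∈ E, ∀ g ∈ E, f ≠ g → ∃ y, y ∈ f ∧ y ∈ g) := by
  classical
  have hav : (HG.adj E v).card = k ^ 2 :=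
    hadj v (Or.inr rfl)
  obtain ⟨hdegA, hEcard, hmeet⟩ := tight hlin hk hE hdeg hdv hav
  have hsize := all_edges_card hlin hk hE hdeg hdv hadj
  -- per-edge analysis
  have main : ∀ f ∈ E, (∀ y ∈ f, HG.deg E y = k) ∧
      (∀ g ∈ E, g ≠ f → ∃ y, y ∈ f ∧ y ∈ g) := by
    intro f hf
    set B := f.biUnion (fun y => (E.filter (fun g => y ∈ g)).erase f) with hB
    have hdisj : ∀ y ∈ f, ∀ y' ∈ f, y ≠ y' →
        Disjoint ((E.filter (fun g => y ∈ g)).erase f) ((E.filter (fun g => y' ∈ g)).erase f) := by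
      intro y hy y' hy' hne
      apply Finset.disjoint_left.mpr
      intro g hg hg'
      rw [Finset.mem_erase, Finset.mem_filter] at hg hg'
      exact hg.1 ((uniqueEdge hlin hf hg.2.1 hy hg.2.2 hy' hg'.2.2 (Ne.symm hne)).symm)
    have hcard : B.card = ∑ y ∈ f, ((E.filter (fun g => y ∈ g)).erase f).card :=
      Finset.card_biUnion hdisj
    have hsub : B ⊆ E.erase f := by
      intro g hg
      rw [hB, Finset.mem_biUnion] at hg
      obtain ⟨y, hy, hg⟩ := hg
      rw [Finset.mem_erase, Finset.mem_filter] at hg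
      exact Finset.mem_erase.mpr ⟨hg.1, hg.2.1⟩
    have hterm : ∀ y ∈ f, ((E.filter (fun g => y ∈ g)).erase f).card = HG.deg E y - 1 := by
      intro y hy
      rw [Finset.card_erase_of_mem (Finset.mem_filter.mpr ⟨hf, hy⟩), deg_eq]
    have hlowB : (k + 1) * (k - 1) ≤ B.card := by
      rw [hcard]
      calc (k+1)*(k-1) = ∑ _y ∈ f, (k-1) := by
            rw [Finset.sum_const, smul_eq_mul, hsize f hf]
      _ ≤ _ := by
            apply Finset.sum_le_sum
            intro y hy
            rw [hterm y hy]
            have := hdeg y (mem_verts.mpr ⟨f, hf, hy⟩)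
            omega
    have hide : (k+1)*(k-1) = k^2 - 1 := by
      obtain ⟨m, rfl⟩ : ∃ m, k = m + 1 := ⟨k - 1, by omega⟩
      have h0 : (m+1)^2 = (m+1+1)*m + 1 := by ring
      have h1 : (m+1)-1 = m := rfl
      rw [h1]
      omega
    have hcardE : (E.erase f).card = k ^ 2 - 1 := by
      rw [Finset.card_erase_of_mem hf, hEcard]
    have hBeq : B = E.erase f := by
      apply Finset.eq_of_subset_of_card_le hsub
      rw [hcardE, ← hide]; exact hlowB
    constructor
    · -- degrees
      intro y hy
      have hexact : ∑ y ∈ f, ((E.filter (fun g => y ∈ g)).erase f).card ≤ f.card * (k - 1) := by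
        rw [← hcard, hBeq, hcardE, hsize f hf, ← hide]
      have := all_eq_of_sum_le f _ (k - 1)
        (fun y hy => by rw [hterm y hy]; have := hdeg y (mem_verts.mpr ⟨f, hf, hy⟩); omega)
        hexact y hy
      rw [hterm y hy] at this
      have := hdeg y (mem_verts.mpr ⟨f, hf, hy⟩)
      omega
    · intro g hg hne
      have : g ∈ B := by rw [hBeq]; exact Finset.mem_erase.mpr ⟨hne, hg⟩
      rw [hB, Finset.mem_biUnion] at this
      obtain ⟨y, hy, hg'⟩ := this
      rw [Finset.mem_erase, Finset.mem_filter] at hg'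
      exact ⟨y, hy, hg'.2.2⟩
  constructor
  · intro u hu
    obtain ⟨f, hf, huf⟩ := mem_verts.mp hu
    exact (main f hf).1 u huf
  · intro f hf g hg hne
    exact (main f hf).2 g hg (Ne.symm hne)

lemma sum_card_eq_sum_deg : ∑ f ∈ E, f.card = ∑ u ∈ HG.verts E, HG.deg E u := by
  classical
  have h1 : ∀ f ∈ E, f.card = ((HG.verts E).filter (fun u => u ∈ f)).card := by
    intro f hf
    congr 1
    ext x
    simp only [Finset.mem_filter]
    exact ⟨fun hx => ⟨mem_verts.mpr ⟨f, hf, hx⟩, hx⟩, fun hx => hx.2⟩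
  rw [Finset.sum_congr rfl h1]
  simp only [Finset.card_filter, deg_eq]
  exact Finset.sum_comm

/-- assembling the regular structure -/
lemma structure_all (hlin : HG.Linear E) {k : ℕ} (hk : 2 ≤ k) (hE : E.card ≤ k ^ 2)
    (hdeg : ∀ u ∈ HG.verts E, k ≤ HG.deg E u) {v : V} (hv : v ∈ HG.verts E) (hdv : HG.deg E v = k)
    (hadj : ∀ u, (u ∈ HG.adj E v ∨ u = v) → (HG.adj E u).card = k ^ 2) :
    (∀ f ∈ E, f.card = k + 1) ∧ (∀ u ∈ HG.verts E, HG.deg E u = k) ∧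
      (∀ f ∈ E, ∀ g ∈ E, f ≠ g → ∃ y, y ∈ f ∧ y ∈ g) ∧
      (∀ u ∈ HG.verts E, (HG.adj E u).card = k * k) ∧
      (HG.verts E).card = k * (k + 1) := by
  classical
  have hav : (HG.adj E v).card = k ^ 2 :=
    hadj v (Or.inr rfl)
  obtain ⟨hdegA, hEcard, hmeet⟩ := tight hlin hk hE hdeg hdv hav
  have hsize := all_edges_card hlin hk hE hdeg hdv hadj
  obtain ⟨hdegall, hmeetall⟩ := all_deg_and_meet hlin hk hE hdeg hdv hadj
  have hadjcard : ∀ u ∈ HG.verts E, (HG.adj E u).card = k * k := by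
    intro u hu
    rw [card_adj hlin u]
    have h1 : ∀ f ∈ E.filter (fun f => u ∈ f), f.card - 1 = k := by
      intro f hf
      rw [Finset.mem_filter] at hf
      rw [hsize f hf.1]
      omega
    rw [Finset.sum_congr rfl h1, Finset.sum_const, smul_eq_mul]
    have h2 : (E.filter (fun f => u ∈ f)).card = k := hdegall u hu
    rw [h2]
  have hvcard : (HG.verts E).card = k * (k + 1) := by
    have h1 : ∑ f ∈ E, f.card = k ^ 2 * (k + 1) := by
      rw [Finset.sum_congr rfl hsize, Finset.sum_const, smul_eq_mul, hEcard]
    have h2 : ∑ u ∈ HG.verts E, HG.deg E u = (HG.verts E).card * k := by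
      rw [Finset.sum_congr rfl hdegall, Finset.sum_const, smul_eq_mul]
    have h3 := sum_card_eq_sum_deg (E := E)
    rw [h1, h2] at h3
    have h4 : k * (k + 1) * k = (HG.verts E).card * k := by rw [← h3]; ring
    exact (Nat.eq_of_mul_eq_mul_right (by omega) h4).symm
  exact ⟨hsize, hdegall, hmeetall, hadjcard, hvcard⟩

/-- The key geometric lemma: if w is a non-neighbor of u, then w is adjacent to
every other vertex of any edge through u. -/
lemma key_lemma (hlin : HG.Linear E) {k : ℕ} (hk : 2 ≤ k)
    (hsize : ∀ f ∈ E, f.card = k + 1) (hdegall : ∀ u ∈ HG.verts E, HG.deg E u = k)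
    (hmeetall : ∀ f ∈ E, ∀ g ∈ E, f ≠ g → ∃ y, y ∈ f ∧ y ∈ g)
    {u w : V} (hu : u ∈ HG.verts E) (hw : w ∈ HG.verts E) (hwu : w ≠ u)
    (hnadj : w ∉ HG.adj E u) {g : Finset V} (hg : g ∈ E) (hug : u ∈ g) :
    g.erase u ⊆ HG.adj E w := by
  classical
  have hwg : w ∉ g := fun h => hnadj (mem_adj.mpr ⟨hwu, g, hg, hug, h⟩)
  set T := (g.erase u).filter (fun x => x ∈ HG.adj E w) with hT
  set Fw := E.filter (fun f => w ∈ f) with hFw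
  have hFwcard : Fw.card = k := hdegall w hw
  have hex : ∀ f ∈ Fw, ∃ y, y ∈ f ∧ y ∈ g := by
    intro f hf
    rw [hFw, Finset.mem_filter] at hf
    have hne : f ≠ g := fun h => hwg (h ▸ hf.2)
    exact hmeetall f hf.1 g hg hne
  set pick : Finset V → V := fun f => if h : ∃ y, y ∈ f ∧ y ∈ g then h.choose else u with hpick
  have hpickT : ∀ f ∈ Fw, pick f ∈ T := by
    intro f hf
    have h := hex f hf
    rw [hpick]
    simp only [dif_pos h]
    obtain ⟨hy1, hy2⟩ := h.choose_spec
    rw [hFw, Finset.mem_filter] at hf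
    have hyu : h.choose ≠ u := by
      intro heq
      exact hnadj (mem_adj.mpr ⟨hwu, f, hf.1, heq ▸ hy1, hf.2⟩)
    have hyw : h.choose ≠ w := fun heq => hwg (heq ▸ hy2)
    exact Finset.mem_filter.mpr ⟨Finset.mem_erase.mpr ⟨hyu, hy2⟩,
      mem_adj.mpr ⟨hyw, f, hf.1, hf.2, hy1⟩⟩
  have hinj : Set.InjOn pick Fw := by
    intro f1 hf1 f2 hf2 heq
    rw [Finset.mem_coe] at hf1 hf2
    by_contra hne
    have hm1 := Finset.mem_filter.mp hf1
    have hm2 := Finset.mem_filter.mp hf2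
    have h1 := hex f1 hf1
    have h2 := hex f2 hf2
    rw [hpick] at heq
    simp only [dif_pos h1, dif_pos h2] at heq
    obtain ⟨ha1, ha2⟩ := h1.choose_spec
    obtain ⟨hb1, hb2⟩ := h2.choose_spec
    have := uniqueEdge hlin hm1.1 hm2.1 hm1.2 hm2.2 ha1 (heq ▸ hb1)
      (fun hc => hwg (hc ▸ ha2))
    exact hne this
  have hcardle : k ≤ T.card := by
    rw [← hFwcard]
    exact Finset.card_le_card_of_injOn pick hpickT hinj
  have hTsub : T ⊆ g.erase u := Finset.filter_subset _ _
  have hgcard : (g.erase u).card = k := by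
    rw [Finset.card_erase_of_mem hug, hsize g hg]
    omega
  have hTeq : T = g.erase u := Finset.eq_of_subset_of_card_le hTsub (by omega)
  intro x hx
  have : x ∈ T := hTeq ▸ hx
  exact (Finset.mem_filter.mp this).2

lemma adj_eq_of_nonadj (hlin : HG.Linear E) {k : ℕ} (hk : 2 ≤ k)
    (hsize : ∀ f ∈ E, f.card = k + 1) (hdegall : ∀ u ∈ HG.verts E, HG.deg E u = k)
    (hmeetall : ∀ f ∈ E, ∀ g ∈ E, f ≠ g → ∃ y, y ∈ f ∧ y ∈ g)
    {u w : V} (hu : u ∈ HG.verts E) (hw : w ∈ HG.verts E) (hwu : w ≠ u)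
    (hnadj : w ∉ HG.adj E u) : HG.adj E u = HG.adj E w := by
  have hstep : ∀ u' w', u' ∈ HG.verts E → w' ∈ HG.verts E → w' ≠ u' → w' ∉ HG.adj E u' →
      HG.adj E u' ⊆ HG.adj E w' := by
    intro u' w' hu' hw' hne hna x hx
    obtain ⟨hxu, g, hg, hug, hxg⟩ := mem_adj.mp hx
    exact key_lemma hlin hk hsize hdegall hmeetall hu' hw' hne hna hg hug
      (Finset.mem_erase.mpr ⟨hxu, hxg⟩)
  have h1 := hstep u w hu hw hwu hnadj
  have h2 := hstep w u hw hu (Ne.symm hwu) (fun h => hnadj (adj_comm.mp h))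
  exact Finset.Subset.antisymm h1 h2

lemma main_color (hlin : HG.Linear E) {k : ℕ} (hk : 2 ≤ k) (hE : E.card ≤ k ^ 2)
    (hdeg : ∀ u ∈ HG.verts E, k ≤ HG.deg E u) {v : V} (hv : v ∈ HG.verts E)
    (hdv : HG.deg E v = k)
    (hadj : ∀ u, (u ∈ HG.adj E v ∨ u = v) → (HG.adj E u).card = k ^ 2) :
    ∃ f : V → Fin (k + 1), HG.Proper E f := by
  classical
  obtain ⟨hsize, hdegall, hmeetall, hadjcard, hvcard⟩ :=
    structure_all hlin hk hE hdeg hv hdv hadj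
  set W := HG.verts E with hW
  set C : V → Finset V := fun u => W \ HG.adj E u with hC
  have hCmem : ∀ u ∈ W, u ∈ C u := fun u hu => Finset.mem_sdiff.mpr ⟨hu, not_self_adj⟩
  have hCsub : ∀ u, C u ⊆ W := fun u => Finset.sdiff_subset
  have hCcard : ∀ u ∈ W, (C u).card = k := by
    intro u hu
    have h1 : (C u).card = W.card - (HG.adj E u).card :=
      Finset.card_sdiff_of_subset adj_subset_verts
    rw [h1, hvcard, hadjcard u hu]
    have h2 : k * (k + 1) = k * k + k := by ring
    omega
  have hCeq : ∀ u ∈ W, ∀ w ∈ C u, C w = C u := by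
    intro u hu w hw
    rw [hC] at hw
    simp only [Finset.mem_sdiff] at hw
    by_cases hwu : w = u
    · rw [hwu]
    · have hadjeq : HG.adj E u = HG.adj E w :=
        adj_eq_of_nonadj hlin hk hsize hdegall hmeetall hu hw.1 hwu hw.2
      rw [hC]
      simp only [hadjeq]
  set 𝒞 := W.image C with h𝒞def
  have hrep : ∀ c ∈ 𝒞, ∃ u ∈ W, C u = c := by
    intro c hc
    rw [h𝒞def, Finset.mem_image] at hc
    obtain ⟨u, hu, hcu⟩ := hc
    exact ⟨u, hu, hcu⟩
  have hdisj : ∀ c₁ ∈ 𝒞, ∀ c₂ ∈ 𝒞, c₁ ≠ c₂ → Disjoint c₁ c₂ := by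
    intro c₁ hc₁ c₂ hc₂ hne
    obtain ⟨u₁, hu₁, rfl⟩ := hrep c₁ hc₁
    obtain ⟨u₂, hu₂, rfl⟩ := hrep c₂ hc₂
    apply Finset.disjoint_left.mpr
    intro x hx1 hx2
    have hxW : x ∈ W := hCsub u₁ hx1
    have e1 := hCeq u₁ hu₁ x hx1
    have e2 := hCeq u₂ hu₂ x hx2
    exact hne (e1 ▸ e2 ▸ rfl)
  have hcover : W = 𝒞.biUnion id := by
    apply Finset.Subset.antisymm
    · intro u hu
      exact Finset.mem_biUnion.mpr ⟨C u, Finset.mem_image_of_mem C hu, hCmem u hu⟩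
    · intro x hx
      rw [Finset.mem_biUnion] at hx
      obtain ⟨c, hc, hxc⟩ := hx
      obtain ⟨u, hu, rfl⟩ := hrep c hc
      exact hCsub u hxc
  have h𝒞card : 𝒞.card = k + 1 := by
    have h1 : W.card = ∑ c ∈ 𝒞, (id c).card := by
      rw [hcover]
      exact Finset.card_biUnion hdisj
    have h2 : ∀ c ∈ 𝒞, (id c).card = k := by
      intro c hc
      obtain ⟨u, hu, rfl⟩ := hrep c hc
      exact hCcard u hu
    rw [Finset.sum_congr rfl h2, Finset.sum_const, smul_eq_mul, hvcard] at h1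
    have h3 : (k + 1) * k = 𝒞.card * k := by rw [← h1]; ring
    exact (Nat.eq_of_mul_eq_mul_right (by omega) h3).symm
  set ι := 𝒞.equivFinOfCardEq h𝒞card with hι
  refine ⟨fun x => if hx : x ∈ W then ι ⟨C x, Finset.mem_image_of_mem C hx⟩
    else ι ⟨C v, Finset.mem_image_of_mem C hv⟩, ?_⟩
  intro e he x hx y hy hne
  have hxW : x ∈ W := mem_verts.mpr ⟨e, he, hx⟩
  have hyW : y ∈ W := mem_verts.mpr ⟨e, he, hy⟩
  simp only [dif_pos hxW, dif_pos hyW]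
  intro heq
  have hCxy : C x = C y := congrArg Subtype.val (ι.injective heq)
  have hyadj : y ∈ HG.adj E x := mem_adj.mpr ⟨Ne.symm hne, e, he, hx, hy⟩
  have hyC : y ∈ C y := hCmem y hyW
  rw [← hCxy, hC] at hyC
  simp only [Finset.mem_sdiff] at hyC
  exact hyC.2 hyadj

end HGaux



theorem stmt7 {V : Type*} [DecidableEq V] (k : ℕ) (hk : 0 < k)
    (E : Finset (Finset V)) (hlin : HG.Linear E)
    (hE : E.card ≤ k ^ 2) (hsize : ∀ e ∈ E, e.card ≤ k ^ 2)
    (hdeg : ∀ u ∈ HG.verts E, k ≤ HG.deg E u)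
    (v : V) (hv : v ∈ HG.verts E) (hdv : HG.deg E v = k)
    (hadj : ∀ u ∈ HG.adj E v ∪ {v}, (HG.adj E u).card = k ^ 2) :
    (∃ f : V → Fin (k + 1), HG.Proper E f) ∧ (∃ g : V → Fin (k ^ 2), HG.Proper E g) := by
  rcases Nat.lt_or_ge k 2 with hk1 | hk2
  · -- k = 1 : the hypotheses are contradictory
    exfalso
    have hk1' : k = 1 := by omega
    subst hk1'
    have hav : (HG.adj E v).card = 1 :=
      hadj v (Finset.mem_union_right _ (Finset.mem_singleton_self v))
    have hne : (HG.adj E v).Nonempty := by rw [← Finset.card_pos, hav]; omega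
    obtain ⟨u, hu⟩ := hne
    obtain ⟨huv, e, he, hve, hue⟩ := HGaux.mem_adj.mp hu
    have h2 : ({u, v} : Finset V) ⊆ e := by
      intro y hy
      rcases Finset.mem_insert.mp hy with rfl | hy
      · exact hue
      · rw [Finset.mem_singleton.mp hy]; exact hve
    have h3 : ({u, v} : Finset V).card = 2 := Finset.card_pair huv
    have h4 := Finset.card_le_card h2
    have h5 := hsize e he
    omega
  · -- main case
    have hadj' : ∀ u, (u ∈ HG.adj E v ∨ u = v) → (HG.adj E u).card = k ^ 2 := by
      intro u hu
      rcases hu with hu | rfl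
      · exact hadj u (Finset.mem_union_left _ hu)
      · exact hadj u (Finset.mem_union_right _ (Finset.mem_singleton_self u))
    obtain ⟨f, hf⟩ := HGaux.main_color hlin hk2 hE hdeg hv hdv hadj'
    have hle : k + 1 ≤ k ^ 2 := by nlinarith
    refine ⟨⟨f, hf⟩, ⟨fun x => Fin.castLE hle (f x), ?_⟩⟩
    intro e he x hx y hy hne heq
    exact hf e he x hx y hy hne (Fin.castLE_injective hle heq)
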